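/- Let α be a type, n a natural number, a : Fin n → α an injective function, and z : Fin n → Option α such that any two non-erased entries are distinct (i.e., if z_i = z_j ≠ none then i = j). Let r be the cardinality of {i ∈ Fin n : ∃ j, z_j = some(a_i)} (the number of values of a that appear among the non-erased entries of z). Then there exist permutations σ and τ of Fin n such that, for every permutation π of Fin n, |{i ∈ Fin n : z(τ(i)) = some(a(σ(π(i))))}| = |{i ∈ Fin n : (i : ℕ) < r and π(i) = i}|. (This is the alignment step, Eqns. (19) and (22), in the proof of Proposition 1.) -/

import Mathlib

/-- **Alignment step (Eqns. (19) and (22) in the proof of Proposition 1).**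
If `a : Fin n → α` is injective and the non-erased entries of
`z : Fin n → Option α` are pairwise distinct, and `r` is the number of
values of `a` appearing among the non-erased entries of `z`, then there
are permutations `σ, τ` of `Fin n` such that for every permutation `π`,
the number of indices `i` with `z (τ i) = some (a (σ (π i)))` equals the
number of fixed points of `π` among the first `r` indices. -/
theorem stmt2 {α : Type*} [DecidableEq α] (n : ℕ)
    (a : Fin n → α) (ha : Function.Injective a)
    (z : Fin n → Option α)
    (hz : ∀ i j : Fin n, z i = z j → z i ≠ none → i = j)
    (r : ℕ)
    (hr : r = (Finset.univ.filter fun i : Fin n => ∃ j : Fin n, z j = some (a i)).card) :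
    ∃ σ τ : Equiv.Perm (Fin n), ∀ π : Equiv.Perm (Fin n),
      (Finset.univ.filter fun i : Fin n => z (τ i) = some (a (σ (π i)))).card =
        (Finset.univ.filter fun i : Fin n => (i : ℕ) < r ∧ π i = i).card := by
  classical
  set S : Finset (Fin n) := Finset.univ.filter fun i : Fin n => ∃ j : Fin n, z j = some (a i)
    with hSdef
  set T : Finset (Fin n) := Finset.univ.filter fun i : Fin n => (i : ℕ) < r with hTdef
  have hrn : r ≤ n := by
    rw [hr]
    calc S.card ≤ (Finset.univ : Finset (Fin n)).card := Finset.card_le_univ _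
    _ = n := by simp
  have hcardT : T.card = r := by
    have : T.card = (Finset.range r).card := by
      refine Finset.card_bij (fun (i : Fin n) _ => (i : ℕ)) ?_ ?_ ?_
      · intro i hi; simp [hTdef] at hi ⊢; exact hi
      · intro i _ j _ h; exact Fin.val_injective h
      · intro m hm
        simp at hm
        exact ⟨⟨m, lt_of_lt_of_le hm hrn⟩, by simp [hTdef, hm], rfl⟩
    simpa using this
  -- the chooser f
  have hmemS : ∀ i : Fin n, i ∈ S ↔ ∃ j : Fin n, z j = some (a i) := by
    intro i; simp [hSdef]
  have fspec : ∀ m : {x // x ∈ S}, ∃ j : Fin n, z j = some (a m.1) := fun m =>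
    (hmemS m.1).mp m.2
  set f : {x // x ∈ S} → Fin n := fun m => Classical.choose (fspec m) with hfdef
  have hf : ∀ m, z (f m) = some (a m.1) := fun m => Classical.choose_spec (fspec m)
  have hfinj : Function.Injective f := by
    intro m₁ m₂ h
    have : some (a m₁.1) = some (a m₂.1) := by rw [← hf m₁, ← hf m₂, h]
    exact Subtype.ext (ha (Option.some_injective _ this))
  set F : Finset (Fin n) := S.attach.image f with hFdef
  have hcardF : F.card = r := by
    rw [hFdef, Finset.card_image_of_injective _ hfinj, Finset.card_attach, hr]
  -- bijections
  have hcardTS : T.card = S.card := by rw [hcardT, hr]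
  have hcardTF : T.card = F.card := by rw [hcardT, hcardF]
  set e₁ : {x // x ∈ T} ≃ {x // x ∈ S} := Finset.equivOfCardEq hcardTS with he₁
  set eSF : {x // x ∈ S} ≃ {x // x ∈ F} :=
    Equiv.ofBijective (fun m => ⟨f m, Finset.mem_image.mpr ⟨m, Finset.mem_attach _ _, rfl⟩⟩)
      ⟨fun m₁ m₂ h => hfinj (Subtype.ext_iff.mp h), by
        rintro ⟨j, hj⟩
        obtain ⟨m, _, hm⟩ := Finset.mem_image.mp hj
        exact ⟨m, Subtype.ext hm⟩⟩ with heSF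
  have hcT : Fintype.card {x // x ∉ T} = n - r := by
    simp [Fintype.card_subtype_compl, Fintype.card_coe, hcardT]
  have hcS : Fintype.card {x // x ∉ S} = n - r := by
    simp [Fintype.card_subtype_compl, Fintype.card_coe, ← hr]
  have hcF : Fintype.card {x // x ∉ F} = n - r := by
    simp [Fintype.card_subtype_compl, Fintype.card_coe, hcardF]
  set e₂ : {x // x ∉ T} ≃ {x // x ∉ S} := Fintype.equivOfCardEq (by rw [hcT, hcS]) with he₂
  set e₃ : {x // x ∉ T} ≃ {x // x ∉ F} := Fintype.equivOfCardEq (by rw [hcT, hcF]) with he₃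
  set σ : Equiv.Perm (Fin n) :=
    ((Equiv.sumCompl (· ∈ T)).symm.trans ((e₁.sumCongr e₂).trans (Equiv.sumCompl (· ∈ S))))
    with hσ
  set τ : Equiv.Perm (Fin n) :=
    ((Equiv.sumCompl (· ∈ T)).symm.trans (((e₁.trans eSF).sumCongr e₃).trans
      (Equiv.sumCompl (· ∈ F)))) with hτ
  have hσT : ∀ i (h : i ∈ T), σ i = (e₁ ⟨i, h⟩ : Fin n) := by
    intro i h
    simp [hσ, Equiv.sumCompl_symm_apply_of_pos h]
  have hσTc : ∀ i (h : i ∉ T), σ i = (e₂ ⟨i, h⟩ : Fin n) := by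
    intro i h
    simp [hσ, Equiv.sumCompl_symm_apply_of_neg h]
  have hτT : ∀ i (h : i ∈ T), τ i = f (e₁ ⟨i, h⟩) := by
    intro i h
    simp [hτ, Equiv.sumCompl_symm_apply_of_pos h, heSF]
    rfl
  have hτTc : ∀ i (h : i ∉ T), τ i ∉ F := by
    intro i h
    rw [show τ i = (e₃ ⟨i, h⟩ : Fin n) by
      simp [hτ, Equiv.sumCompl_symm_apply_of_neg h]]
    exact (e₃ ⟨i, h⟩).2
  refine ⟨σ, τ, fun π => ?_⟩
  congr 1
  apply Finset.filter_congr
  intro i _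
  by_cases hiT : i ∈ T
  · have hiTr : (i : ℕ) < r := by simpa [hTdef] using hiT
    have hzτ : z (τ i) = some (a (σ i)) := by
      rw [hτT i hiT, hf, hσT i hiT]
    constructor
    · intro hzi
      refine ⟨hiTr, ?_⟩
      have : a (σ i) = a (σ (π i)) := by
        have := hzτ.symm.trans hzi
        exact Option.some_injective _ this
      exact σ.injective (ha this) |>.symm
    · rintro ⟨-, hfix⟩
      rw [hfix, ← hzτ]
  · have hiTr : ¬ (i : ℕ) < r := by simpa [hTdef] using hiT
    simp only [hiTr, false_and, iff_false]
    intro hzi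
    have hmem : σ (π i) ∈ S := (hmemS _).mpr ⟨τ i, hzi⟩
    have : τ i = f ⟨σ (π i), hmem⟩ := by
      apply hz
      · rw [hzi, hf]
      · rw [hzi]; simp
    exact hτTc i hiT (this ▸ Finset.mem_image.mpr ⟨⟨σ (π i), hmem⟩, Finset.mem_attach _ _, rfl⟩)
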